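/- Let Q = (0,T) × 𝕋³ with the Lebesgue measure. Let F_n, F : ℝ³ˣ³_sym → [0,∞) be convex functions, finite everywhere, such that F_n → F uniformly on every compact subset of ℝ³ˣ³_sym. Let V : Q → ℝ³ˣ³_sym be continuous and bounded, and let 𝕊_n → 𝕊 weakly in L¹(Q; ℝ³ˣ³_sym). Assume that for every n, 𝕊_n(t,x) ∈ ∂F_n(V(t,x)) for a.e. (t,x) ∈ Q, i.e. for every 𝔻 ∈ ℝ³ˣ³_sym: F_n(𝔻) − 𝕊_n(t,x):(𝔻 − V(t,x)) − F_n(V(t,x)) ≥ 0 a.e. Then 𝕊(t,x) ∈ ∂F(V(t,x)) for a.e. (t,x) ∈ Q, i.e. for every 𝔻 ∈ ℝ³ˣ³_sym: F(𝔻) − 𝕊(t,x):(𝔻 − V(t,x)) − F(V(t,x)) ≥ 0 for a.e. (t,x). -/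

import Mathlib

open MeasureTheory Filter Set

noncomputable section

/-- Points of `ℝ³`; functions on the torus `𝕋³` are identified with `ℤ³`-periodic
functions; a fundamental domain is the unit box. -/
abbrev V3 := Fin 3 → ℝ

/-- The space of real 3×3 matrices; symmetric ones are cut out by `Matrix.IsSymm`. -/
abbrev Mat3 := Matrix (Fin 3) (Fin 3) ℝ

/-- Frobenius inner product `𝕊:𝔻`. -/
def mdot (A B : Mat3) : ℝ := ∑ i, ∑ j, A i j * B i j

/-- Frobenius norm. -/
noncomputable def mnorm (A : Mat3) : ℝ := Real.sqrt (mdot A A)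

/-- A fundamental domain of `𝕋³`. -/
def box : Set V3 := Set.Icc 0 1

/-- The Lebesgue measure on `Q = (0,T) × 𝕋³`. -/
noncomputable def μQ (T : ℝ) : Measure (ℝ × V3) :=
  volume.restrict (Set.Ioo 0 T ×ˢ box)

/-! ### Auxiliary lemmas -/

section Aux

lemma cont_entry (i j : Fin 3) : Continuous (fun A : Mat3 => A i j) :=
  ((continuous_apply j).comp (continuous_apply i) : _)

lemma isClosed_symm : IsClosed {A : Mat3 | A.IsSymm} := by
  have h : {A : Mat3 | A.IsSymm} = ⋂ i, ⋂ j, {A : Mat3 | A j i = A i j} := by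
    ext A
    simp only [mem_setOf_eq, mem_iInter, Matrix.IsSymm, ← Matrix.ext_iff, Matrix.transpose_apply]
  rw [h]
  exact isClosed_iInter fun i => isClosed_iInter fun j =>
    isClosed_eq (cont_entry j i) (cont_entry i j)

lemma cont_mdot_right (A : Mat3) : Continuous (fun B : Mat3 => mdot A B) := by
  unfold mdot
  exact continuous_finset_sum _ fun i _ => continuous_finset_sum _ fun j _ =>
    continuous_const.mul (cont_entry i j)

lemma cont_mnorm : Continuous mnorm := by
  unfold mnorm mdot
  exact Real.continuous_sqrt.comp (continuous_finset_sum _ fun i _ =>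
    continuous_finset_sum _ fun j _ => (cont_entry i j).mul (cont_entry i j))

lemma sq_le_mdot (A : Mat3) (i j : Fin 3) : A i j * A i j ≤ mdot A A := by
  unfold mdot
  calc A i j * A i j ≤ ∑ j', A i j' * A i j' := by
        apply Finset.single_le_sum (f := fun j' => A i j' * A i j')
          (fun k _ => mul_self_nonneg _) (Finset.mem_univ j)
    _ ≤ ∑ i', ∑ j', A i' j' * A i' j' :=
        Finset.single_le_sum (f := fun i' => ∑ j', A i' j' * A i' j')
          (fun k _ => Finset.sum_nonneg fun l _ => mul_self_nonneg _) (Finset.mem_univ i)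

lemma abs_entry_le_mnorm (A : Mat3) (i j : Fin 3) : |A i j| ≤ mnorm A := by
  have h2 : |A i j| = Real.sqrt (A i j * A i j) := (Real.sqrt_mul_self_eq_abs _).symm
  rw [h2]; exact Real.sqrt_le_sqrt (sq_le_mdot A i j)

lemma mnorm_nonneg (A : Mat3) : 0 ≤ mnorm A := Real.sqrt_nonneg _

lemma mnorm_le_of_entries (A : Mat3) (C : ℝ) (hC : 0 ≤ C) (h : ∀ i j, |A i j| ≤ C) :
    mnorm A ≤ 3 * C := by
  have hle : mdot A A ≤ (3 * C) * (3 * C) := by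
    unfold mdot
    calc ∑ i, ∑ j, A i j * A i j ≤ ∑ _i : Fin 3, ∑ _j : Fin 3, C * C := by
          apply Finset.sum_le_sum; intro i _
          apply Finset.sum_le_sum; intro j _
          calc A i j * A i j = |A i j| * |A i j| := (abs_mul_abs_self _).symm
            _ ≤ C * C := mul_le_mul (h i j) (h i j) (abs_nonneg _) hC
      _ = (3 * C) * (3 * C) := by simp; ring
  calc mnorm A = Real.sqrt (mdot A A) := rfl
    _ ≤ Real.sqrt ((3 * C) * (3 * C)) := Real.sqrt_le_sqrt hle
    _ = |3 * C| := Real.sqrt_mul_self_eq_abs _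
    _ = 3 * C := abs_of_nonneg (by linarith)

lemma isCompact_KM (M : ℝ) : IsCompact {A : Mat3 | A.IsSymm ∧ mnorm A ≤ M} := by
  set C := max M 0 with hC
  have hbig : IsCompact {A : Mat3 | ∀ i j, A i j ∈ Icc (-C) C} := by
    have h : IsCompact ((univ : Set (Fin 3)).pi fun _ =>
        (univ : Set (Fin 3)).pi fun _ => Icc (-C) C) :=
      isCompact_univ_pi fun _ => isCompact_univ_pi fun _ => isCompact_Icc
    refine (congrArg IsCompact ?_).mpr h
    ext A
    constructor
    · intro hA i _ j _; exact hA i j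
    · intro hA i j; exact hA i (mem_univ i) j (mem_univ j)
  apply hbig.of_isClosed_subset
  · exact isClosed_symm.inter (isClosed_le cont_mnorm continuous_const)
  · rintro A ⟨-, hA2⟩ i j
    exact abs_le.1 (le_trans (abs_entry_le_mnorm A i j) (le_trans hA2 (le_max_left _ _)))

/-- Symmetrization of a matrix. -/
noncomputable def symmetrize (B : Mat3) : Mat3 := (2⁻¹ : ℝ) • (B + B.transpose)

lemma symmetrize_isSymm (B : Mat3) : (symmetrize B).IsSymm := by
  unfold symmetrize Matrix.IsSymm
  rw [Matrix.transpose_smul, Matrix.transpose_add, Matrix.transpose_transpose, add_comm]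

lemma symmetrize_of_isSymm {B : Mat3} (hB : B.IsSymm) : symmetrize B = B := by
  unfold symmetrize
  rw [hB, smul_add]; module

lemma symmetrize_linear (a b : ℝ) (x y : Mat3) :
    symmetrize (a • x + b • y) = a • symmetrize x + b • symmetrize y := by
  unfold symmetrize
  rw [Matrix.transpose_add, Matrix.transpose_smul, Matrix.transpose_smul]
  module

/-- A finite convex function on the symmetric matrices is continuous there. -/
lemma convexOn_symm_continuousOn {G : Mat3 → ℝ}
    (hG : ConvexOn ℝ {A : Mat3 | A.IsSymm} G) :
    ContinuousOn G {A : Mat3 | A.IsSymm} := by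
  have hconv : ConvexOn ℝ (univ : Set (Fin 3 → Fin 3 → ℝ)) (fun B => G (symmetrize B)) := by
    refine ⟨convex_univ, fun x _ y _ a b ha hb hab => ?_⟩
    have h := hG.2 (symmetrize_isSymm x) (symmetrize_isSymm y) ha hb hab
    show G (symmetrize (a • x + b • y)) ≤ a • G (symmetrize x) + b • G (symmetrize y)
    rw [show symmetrize (a • x + b • y) = a • symmetrize x + b • symmetrize y from
      symmetrize_linear a b x y]
    exact h
  have hcont : ContinuousOn (fun B : Fin 3 → Fin 3 → ℝ => G (symmetrize B)) univ :=
    ConvexOn.continuousOn isOpen_univ hconv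
  have hcont2 : Continuous (fun B : Mat3 => G (symmetrize B)) := by
    rw [← continuousOn_univ]; exact hcont
  exact hcont2.continuousOn.congr fun A hA => by dsimp only; rw [symmetrize_of_isSymm hA]

lemma mdot_smul_right (A B : Mat3) (c : ℝ) : mdot A (c • B) = c * mdot A B := by
  unfold mdot
  rw [Finset.mul_sum]
  refine Finset.sum_congr rfl fun i _ => ?_
  rw [Finset.mul_sum]
  refine Finset.sum_congr rfl fun j _ => ?_
  simp only [Matrix.smul_apply, smul_eq_mul]
  ring

lemma μQ_isFiniteMeasure (T : ℝ) : IsFiniteMeasure (μQ T) := by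
  constructor
  rw [μQ, Measure.restrict_apply_univ]
  have hsub : Set.Ioo 0 T ×ˢ box ⊆ Set.Icc ((0:ℝ),(0:V3)) (T, 1) := by
    rw [← Icc_prod_Icc]
    exact prod_mono Ioo_subset_Icc_self subset_rfl
  exact lt_of_le_of_lt (measure_mono hsub) isCompact_Icc.measure_lt_top

end Aux

/-- stability of the subdifferential inclusion `𝕊ₙ ∈ ∂Fₙ(V)` under
uniform-on-compacts convergence `Fₙ → F` of the convex potentials and weak `L¹`
convergence `𝕊ₙ ⇀ 𝕊`. -/
theorem subdifferential_weak_stability (T : ℝ) (hT : 0 < T)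
    (Fn : ℕ → Mat3 → ℝ) (F : Mat3 → ℝ)
    (hFnconv : ∀ n, ConvexOn ℝ {A : Mat3 | A.IsSymm} (Fn n))
    (hFnnn : ∀ n A, 0 ≤ Fn n A)
    (hFconv : ConvexOn ℝ {A : Mat3 | A.IsSymm} F) (hFnn : ∀ A, 0 ≤ F A)
    (hunif : ∀ K : Set Mat3, IsCompact K → K ⊆ {A : Mat3 | A.IsSymm} →
      TendstoUniformlyOn (fun n => Fn n) F atTop K)
    (V : ℝ × V3 → Mat3)
    (hVsymm : ∀ p, (V p).IsSymm)
    (hVcont : ∀ i j, ContinuousOn (fun p => V p i j) (Set.Ioo 0 T ×ˢ box))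
    (hVbdd : ∃ M, ∀ p ∈ Set.Ioo 0 T ×ˢ box, mnorm (V p) ≤ M)
    (Sn : ℕ → ℝ × V3 → Mat3) (S : ℝ × V3 → Mat3)
    (hSnint : ∀ n i j, Integrable (fun p => Sn n p i j) (μQ T))
    (hSint : ∀ i j, Integrable (fun p => S p i j) (μQ T))
    (hweak : ∀ Φ : ℝ × V3 → Mat3, (∀ i j, Measurable fun p => Φ p i j) →
      (∃ M, ∀ p, mnorm (Φ p) ≤ M) →
      Tendsto (fun n => ∫ p, mdot (Sn n p) (Φ p) ∂μQ T) atTop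
        (nhds (∫ p, mdot (S p) (Φ p) ∂μQ T)))
    (hsub : ∀ n, ∀ᵐ p ∂μQ T, ∀ D : Mat3, D.IsSymm →
      0 ≤ Fn n D - mdot (Sn n p) (D - V p) - Fn n (V p)) :
    ∀ᵐ p ∂μQ T, ∀ D : Mat3, D.IsSymm →
      0 ≤ F D - mdot (S p) (D - V p) - F (V p) := by
  classical
  obtain ⟨M₀, hM₀⟩ := hVbdd
  haveI : IsFiniteMeasure (μQ T) := μQ_isFiniteMeasure T
  haveI : IsTopologicalAddGroup Mat3 := inferInstanceAs (IsTopologicalAddGroup (Fin 3 → Fin 3 → ℝ))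
  haveI : SecondCountableTopology Mat3 :=
    inferInstanceAs (SecondCountableTopology (Fin 3 → Fin 3 → ℝ))
  set Q : Set (ℝ × V3) := Set.Ioo 0 T ×ˢ box with hQdef
  have hQmeas : MeasurableSet Q := measurableSet_Ioo.prod measurableSet_Icc
  have hμdef : μQ T = volume.restrict Q := rfl
  have hmemQ : ∀ᵐ p ∂μQ T, p ∈ Q := by rw [hμdef]; exact ae_restrict_mem hQmeas
  set M : ℝ := max M₀ 0 with hMdef
  have hM0 : 0 ≤ M := le_max_right _ _
  set K : Set Mat3 := {A : Mat3 | A.IsSymm ∧ mnorm A ≤ M} with hKdef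
  have hKcomp : IsCompact K := isCompact_KM M
  have hKsymm : K ⊆ {A : Mat3 | A.IsSymm} := fun A hA => hA.1
  have hVmem : ∀ p ∈ Q, V p ∈ K := fun p hp =>
    ⟨hVsymm p, le_trans (hM₀ p hp) (le_max_left _ _)⟩
  -- continuity of V on Q
  have hVcontOn : ContinuousOn V Q := by
    have : ContinuousOn (fun p => (fun i j => V p i j : Fin 3 → Fin 3 → ℝ)) Q :=
      continuousOn_pi.2 fun i => continuousOn_pi.2 fun j => hVcont i j
    exact this
  -- continuity of F and Fn on symmetric matrices
  have hFcont : ContinuousOn F {A : Mat3 | A.IsSymm} := convexOn_symm_continuousOn hFconv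
  have hFncont : ∀ n, ContinuousOn (Fn n) {A : Mat3 | A.IsSymm} :=
    fun n => convexOn_symm_continuousOn (hFnconv n)
  obtain ⟨CF, hCF⟩ := hKcomp.exists_bound_of_continuousOn (hFcont.mono hKsymm)
  -- measurable bounded modification W of V
  have hVae : ∀ i j, AEMeasurable (fun p => V p i j) (μQ T) := fun i j => by
    rw [hμdef]; exact (hVcont i j).aemeasurable hQmeas
  set W : ℝ × V3 → Mat3 :=
    fun p => Matrix.of fun i j => max (-M) (min M ((hVae i j).mk _ p)) with hWdef
  have hWmeas : ∀ i j, Measurable fun p => W p i j := fun i j =>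
    measurable_const.max (measurable_const.min ((hVae i j).measurable_mk))
  have hWbdd : ∀ p i j, |W p i j| ≤ M := by
    intro p i j
    rw [abs_le]
    exact ⟨le_max_left _ _, max_le (by linarith) (min_le_left _ _)⟩
  have hWV : ∀ᵐ p ∂μQ T, W p = V p := by
    have hall : ∀ᵐ p ∂μQ T, ∀ i j, V p i j = (hVae i j).mk _ p :=
      ae_all_iff.2 fun i => ae_all_iff.2 fun j => (hVae i j).ae_eq_mk
    filter_upwards [hmemQ, hall] with p hp hpeq
    funext i j
    show max (-M) (min M ((hVae i j).mk _ p)) = V p i j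
    rw [← hpeq i j]
    have hb : |V p i j| ≤ M :=
      le_trans (abs_entry_le_mnorm (V p) i j) (hVmem p hp).2
    rw [abs_le] at hb
    rw [min_eq_right hb.2, max_eq_right hb.1]
  -- a.e. strong measurability of F ∘ V and Fn ∘ V
  have hcompae : ∀ (G : Mat3 → ℝ), ContinuousOn G {A : Mat3 | A.IsSymm} →
      AEStronglyMeasurable (fun p => G (V p)) (μQ T) := by
    intro G hGc
    have : ContinuousOn (fun p => G (V p)) Q :=
      hGc.comp hVcontOn fun p hp => (hVmem p hp).1
    rw [hμdef]
    exact (this.aemeasurable hQmeas).aestronglyMeasurable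
  have hFVae : AEStronglyMeasurable (fun p => F (V p)) (μQ T) := hcompae F hFcont
  have hFVint : Integrable (fun p => F (V p)) (μQ T) := by
    refine ⟨hFVae, HasFiniteIntegral.of_bounded (C := CF) ?_⟩
    filter_upwards [hmemQ] with p hp
    exact hCF _ (hVmem p hp)
  -- integrability of p ↦ mdot (S p) (D - W p) type quantities
  have hdotint : ∀ (R : ℝ × V3 → Mat3), (∀ i j, Integrable (fun p => R p i j) (μQ T)) →
      ∀ (Φ : ℝ × V3 → Mat3), (∀ i j, AEStronglyMeasurable (fun p => Φ p i j) (μQ T)) →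
      (∀ (C : ℝ), True) → ∀ (C : ℝ), (∀ p i j, |Φ p i j| ≤ C) →
      Integrable (fun p => mdot (R p) (Φ p)) (μQ T) := by
    intro R hR Φ hΦm _ C hΦb
    have : (fun p => mdot (R p) (Φ p)) = fun p => ∑ i, ∑ j, R p i j * Φ p i j := rfl
    rw [this]
    apply integrable_finset_sum
    intro i _
    apply integrable_finset_sum
    intro j _
    have h1 : (fun p => R p i j * Φ p i j) = fun p => Φ p i j * R p i j := by
      funext p; ring
    rw [h1]
    exact (hR i j).bdd_mul (hΦm i j) (c := C) (ae_of_all _ fun p => by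
      rw [Real.norm_eq_abs]; exact hΦb p i j)
  -- THE KEY STEP: fixed D
  have key : ∀ D : Mat3, D.IsSymm →
      ∀ᵐ p ∂μQ T, 0 ≤ F D - mdot (S p) (D - V p) - F (V p) := by
    intro D hD
    -- enlarged compact set
    set K' : Set Mat3 := insert D K with hK'def
    have hK'comp : IsCompact K' := hKcomp.insert D
    have hK'symm : K' ⊆ {A : Mat3 | A.IsSymm} := by
      rintro A (rfl | hA)
      · exact hD
      · exact hA.1
    have hDK' : D ∈ K' := mem_insert _ _
    have hVK' : ∀ p ∈ Q, V p ∈ K' := fun p hp => mem_insert_of_mem _ (hVmem p hp)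
    have huK' := hunif K' hK'comp hK'symm
    -- entry bound for D - W p
    set CD : ℝ := mnorm D + M with hCDdef
    have hCD0 : 0 ≤ CD := add_nonneg (mnorm_nonneg D) hM0
    have hDWbdd : ∀ p i j, |D i j - W p i j| ≤ CD := by
      intro p i j
      calc |D i j - W p i j| ≤ |D i j| + |W p i j| := abs_sub _ _
        _ ≤ mnorm D + M := add_le_add (abs_entry_le_mnorm D i j) (hWbdd p i j)
    -- integrability of mdot (S p) (D - V p)
    have hSDW : Integrable (fun p => mdot (S p) (D - W p)) (μQ T) := by
      refine hdotint S hSint _ (fun i j => ?_) (fun _ => trivial) CD (fun p i j => hDWbdd p i j)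
      exact (measurable_const.sub (hWmeas i j)).aestronglyMeasurable
    have hSDV : Integrable (fun p => mdot (S p) (D - V p)) (μQ T) := by
      refine hSDW.congr ?_
      filter_upwards [hWV] with p hp
      rw [hp]
    set g : ℝ × V3 → ℝ := fun p => F D - mdot (S p) (D - V p) - F (V p) with hgdef
    have hgint : Integrable g (μQ T) :=
      ((integrable_const (F D)).sub hSDV).sub hFVint
    have hmain : ∀ s : Set (ℝ × V3), MeasurableSet s → μQ T s < ⊤ →
        0 ≤ ∫ p in s, g p ∂μQ T := by
      intro s hs _
      -- indicator function
      set ind : ℝ × V3 → ℝ := s.indicator (fun _ => (1:ℝ)) with hinddef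
      have hindmeas : Measurable ind := measurable_const.indicator hs
      have hind01 : ∀ p, 0 ≤ ind p ∧ ind p ≤ 1 := by
        intro p
        by_cases hps : p ∈ s <;> simp [hinddef, indicator_of_mem, indicator_of_notMem, hps]
      set Φ : ℝ × V3 → Mat3 := fun p => ind p • (D - W p) with hΦdef
      have hΦapp : ∀ p i j, Φ p i j = ind p * (D i j - W p i j) := fun p i j => rfl
      have hΦmeas : ∀ i j, Measurable fun p => Φ p i j := fun i j =>
        hindmeas.mul (measurable_const.sub (hWmeas i j))
      have hΦentry : ∀ p i j, |Φ p i j| ≤ CD := by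
        intro p i j
        rw [hΦapp, abs_mul]
        calc |ind p| * |D i j - W p i j| ≤ 1 * CD := by
              apply mul_le_mul _ (hDWbdd p i j) (abs_nonneg _) zero_le_one
              rw [abs_of_nonneg (hind01 p).1]; exact (hind01 p).2
          _ = CD := one_mul _
      have hΦbdd : ∃ M', ∀ p, mnorm (Φ p) ≤ M' :=
        ⟨3 * CD, fun p => mnorm_le_of_entries _ _ hCD0 (hΦentry p)⟩
      have hlimS := hweak Φ hΦmeas hΦbdd
      -- n-th integrands on the right
      set Jf : ℕ → ℝ × V3 → ℝ := fun n p => ind p * (Fn n D - Fn n (V p)) with hJfdef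
      set Jinf : ℝ × V3 → ℝ := fun p => ind p * (F D - F (V p)) with hJinfdef
      have hJmeas : ∀ n, AEStronglyMeasurable (Jf n) (μQ T) := fun n =>
        hindmeas.aestronglyMeasurable.mul
          (aestronglyMeasurable_const.sub (hcompae (Fn n) (hFncont n)))
      -- per-n integrability and inequality
      have hJint : ∀ n, Integrable (Jf n) (μQ T) := by
        intro n
        obtain ⟨Cn, hCn⟩ := hK'comp.exists_bound_of_continuousOn ((hFncont n).mono hK'symm)
        refine ⟨hJmeas n, HasFiniteIntegral.of_bounded (C := Cn + Cn) ?_⟩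
        filter_upwards [hmemQ] with p hp
        rw [Real.norm_eq_abs, abs_mul]
        calc |ind p| * |Fn n D - Fn n (V p)| ≤ 1 * (|Fn n D| + |Fn n (V p)|) := by
              apply mul_le_mul _ (abs_sub _ _) (abs_nonneg _) zero_le_one
              rw [abs_of_nonneg (hind01 p).1]; exact (hind01 p).2
          _ ≤ 1 * (Cn + Cn) := by
              have h1 := hCn D hDK'
              have h2 := hCn _ (hVK' p hp)
              rw [Real.norm_eq_abs] at h1 h2
              apply mul_le_mul_of_nonneg_left _ zero_le_one
              exact add_le_add h1 h2
          _ = Cn + Cn := one_mul _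
      have hSnΦint : ∀ n, Integrable (fun p => mdot (Sn n p) (Φ p)) (μQ T) := by
        intro n
        exact hdotint (Sn n) (hSnint n) Φ
          (fun i j => (hΦmeas i j).aestronglyMeasurable) (fun _ => trivial) CD hΦentry
      have hIJ : ∀ n, ∫ p, mdot (Sn n p) (Φ p) ∂μQ T ≤ ∫ p, Jf n p ∂μQ T := by
        intro n
        apply integral_mono_ae (hSnΦint n) (hJint n)
        filter_upwards [hsub n, hWV] with p hp hWp
        have h1 : mdot (Sn n p) (Φ p) = ind p * mdot (Sn n p) (D - V p) := by
          show mdot (Sn n p) (ind p • (D - W p)) = _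
          rw [hWp, mdot_smul_right]
        rw [h1]
        have h2 := hp D hD
        exact mul_le_mul_of_nonneg_left (by linarith) (hind01 p).1
      -- convergence of the right-hand side
      have hJlim : Tendsto (fun n => ∫ p, Jf n p ∂μQ T) atTop (nhds (∫ p, Jinf p ∂μQ T)) := by
        apply tendsto_integral_filter_of_dominated_convergence
          (bound := fun _ => (|F D| + 1) + (CF + 1))
        · exact Eventually.of_forall hJmeas
        · have hev := (Metric.tendstoUniformlyOn_iff.1 huK') 1 one_pos
          filter_upwards [hev] with n hn
          filter_upwards [hmemQ] with p hp
          rw [Real.norm_eq_abs, hJfdef]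
          have h1 : |Fn n D| ≤ |F D| + 1 := by
            have := hn D hDK'
            rw [Real.dist_eq] at this
            have habs := abs_sub_abs_le_abs_sub (Fn n D) (F D)
            rw [abs_sub_comm (Fn n D) (F D)] at habs
            linarith
          have h2 : |Fn n (V p)| ≤ CF + 1 := by
            have hdist := hn _ (hVK' p hp)
            rw [Real.dist_eq] at hdist
            have hb := hCF _ (hVmem p hp)
            rw [Real.norm_eq_abs] at hb
            have habs := abs_sub_abs_le_abs_sub (Fn n (V p)) (F (V p))
            rw [abs_sub_comm] at habs
            linarith
          calc |ind p * (Fn n D - Fn n (V p))| ≤ 1 * (|Fn n D| + |Fn n (V p)|) := by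
                rw [abs_mul]
                apply mul_le_mul _ (abs_sub _ _) (abs_nonneg _) zero_le_one
                rw [abs_of_nonneg (hind01 p).1]; exact (hind01 p).2
            _ ≤ 1 * ((|F D| + 1) + (CF + 1)) := by
                apply mul_le_mul_of_nonneg_left _ zero_le_one
                exact add_le_add h1 h2
            _ = (|F D| + 1) + (CF + 1) := one_mul _
        · exact integrable_const _
        · filter_upwards [hmemQ] with p hp
          have hlim1 : Tendsto (fun n => Fn n D) atTop (nhds (F D)) :=
            huK'.tendsto_at hDK'
          have hlim2 : Tendsto (fun n => Fn n (V p)) atTop (nhds (F (V p))) :=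
            huK'.tendsto_at (hVK' p hp)
          exact (hlim1.sub hlim2).const_mul _
      -- pass to the limit
      have hfinal : ∫ p, mdot (S p) (Φ p) ∂μQ T ≤ ∫ p, Jinf p ∂μQ T :=
        le_of_tendsto_of_tendsto' hlimS hJlim hIJ
      -- rewrite the left side
      have hLeq : ∫ p, mdot (S p) (Φ p) ∂μQ T
          = ∫ p, ind p * mdot (S p) (D - V p) ∂μQ T := by
        apply integral_congr_ae
        filter_upwards [hWV] with p hp
        show mdot (S p) (ind p • (D - W p)) = _
        rw [hp, mdot_smul_right]
      -- integrability of the pieces multiplied by ind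
      have hindSint : Integrable (fun p => ind p * mdot (S p) (D - V p)) (μQ T) := by
        have := hSDV.bdd_mul hindmeas.aestronglyMeasurable
          (c := 1) (ae_of_all _ fun p => by rw [Real.norm_eq_abs, abs_of_nonneg (hind01 p).1]; exact (hind01 p).2)
        exact this
      have hJinfint : Integrable Jinf (μQ T) := by
        have := (((integrable_const (F D)).sub hFVint)).bdd_mul hindmeas.aestronglyMeasurable
          (c := 1) (ae_of_all _ fun p => by rw [Real.norm_eq_abs, abs_of_nonneg (hind01 p).1]; exact (hind01 p).2)
        exact this
      -- conclusion for the set s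
      have hsplit : ∫ p in s, g p ∂μQ T
          = ∫ p, Jinf p ∂μQ T - ∫ p, ind p * mdot (S p) (D - V p) ∂μQ T := by
        rw [← integral_indicator hs]
        have h1 : (fun p => s.indicator g p)
            = fun p => Jinf p - ind p * mdot (S p) (D - V p) := by
          funext p
          by_cases hps : p ∈ s
          · simp only [indicator_of_mem hps, hJinfdef, hinddef, indicator_of_mem hps, hgdef]
            ring
          · simp only [indicator_of_notMem hps, hJinfdef, hinddef, indicator_of_notMem hps]
            ring
        rw [h1]
        exact integral_sub hJinfint hindSint
      rw [hsplit, ← hLeq]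
      linarith
    have h0 := ae_nonneg_of_forall_setIntegral_nonneg hgint hmain
    filter_upwards [h0] with p hp using hp
  -- countable dense subset of symmetric matrices
  haveI : SecondCountableTopology {A : Mat3 // A.IsSymm} :=
    inferInstanceAs (SecondCountableTopology {A : Fin 3 → Fin 3 → ℝ // Matrix.IsSymm (Matrix.of A)})
  haveI : TopologicalSpace.SeparableSpace {A : Mat3 // A.IsSymm} :=
    TopologicalSpace.SecondCountableTopology.to_separableSpace
  obtain ⟨c, hccount, hcdense⟩ := TopologicalSpace.exists_countable_dense {A : Mat3 // A.IsSymm}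
  have hae : ∀ᵐ p ∂μQ T, ∀ E : {A : Mat3 // A.IsSymm}, E ∈ c →
      0 ≤ F E.1 - mdot (S p) (E.1 - V p) - F (V p) :=
    (ae_ball_iff hccount).2 fun E _ => key E.1 E.2
  filter_upwards [hae] with p hp D hD
  -- approximate D by elements of c
  have hDcl : (⟨D, hD⟩ : {A : Mat3 // A.IsSymm}) ∈ closure c := hcdense _
  obtain ⟨x, hxc, hxlim⟩ := mem_closure_iff_seq_limit.1 hDcl
  have hlim1 : Tendsto (fun k => ((x k : {A : Mat3 // A.IsSymm}) : Mat3)) atTop (nhds D) :=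
    (continuous_subtype_val.tendsto _).comp hxlim
  have hlimF : Tendsto (fun k => F ((x k : {A : Mat3 // A.IsSymm}) : Mat3)) atTop (nhds (F D)) := by
    have hwithin : Tendsto (fun k => ((x k : {A : Mat3 // A.IsSymm}) : Mat3)) atTop
        (nhdsWithin D {A : Mat3 | A.IsSymm}) :=
      tendsto_nhdsWithin_of_tendsto_nhds_of_eventually_within _ hlim1
        (Eventually.of_forall fun k => (x k).2)
    exact (hFcont D hD).tendsto.comp hwithin
  have hlimdot : Tendsto (fun k => mdot (S p) (((x k : {A : Mat3 // A.IsSymm}) : Mat3) - V p))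
      atTop (nhds (mdot (S p) (D - V p))) :=
    ((cont_mdot_right (S p)).tendsto _).comp (hlim1.sub tendsto_const_nhds)
  refine ge_of_tendsto' ((hlimF.sub hlimdot).sub tendsto_const_nhds) fun k => ?_
  exact hp (x k) (hxc k)
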